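/- Twisted tabulation is 3-independent: if h : Σ^c → [2^r] is a random twisted tabulation hash function (c ≥ 2), then for any three distinct keys x, y, z ∈ Σ^c the hash values h(x), h(y), h(z) are mutually independent random variables, and for every key x the value h(x) is uniformly distributed in [2^r]. -/

import Mathlib

open scoped Classical
open Finset

/-- Bit strings of length `n`, identified with `(𝔽₂)^n`; bitwise XOR is
coordinatewise addition in `ZMod 2`.  This models the set `[2^n]`. -/
abbrev Bits (n : ℕ) : Type := Fin n → ZMod 2

/-- Probability of an event under the uniform distribution on a finite sample space. -/
noncomputable def Pr {Ω : Type*} [Fintype Ω] (E : Ω → Prop) : ℝ :=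
  ((Finset.univ.filter E).card : ℝ) / (Fintype.card Ω : ℝ)

/-- Twisted tabulation hashing with `c = k + 1` characters: a key is a head
`x.1 ∈ Σ` together with a tail `x.2 ∈ Σ^k`.  The tables are
`ω.1 i : Σ → Σ × R` (for the tail positions, each entry carrying a twister
character) and `ω.2 : Σ → R` (for the head).  One computes
`(t, h_{>0}) = ⊕_{i} ω.1 i (x.2 i)` and outputs `h_{>0} ⊕ ω.2 (x.1 ⊕ t)`. -/
def twistedTab {s k : ℕ} {R : Type*} [AddCommMonoid R]
    (ω : (Fin k → Bits s → Bits s × R) × (Bits s → R))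
    (x : Bits s × (Fin k → Bits s)) : R :=
  let p := ∑ i, ω.1 i (x.2 i)
  p.2 + ω.2 (x.1 + p.1)

namespace TwAux

variable {s k r : ℕ}

abbrev Key (s k : ℕ) := Bits s × (Fin k → Bits s)
abbrev Tables (s k r : ℕ) := (Fin k → Bits s → Bits r) × (Bits s → Bits r)

def stab (κ : Key s k) (v : Tables s k r) : Bits r :=
  (∑ i, v.1 i (κ.2 i)) + v.2 κ.1

lemma stab_add (κ : Key s k) (p q : Tables s k r) :
    stab κ (p + q) = stab κ p + stab κ q := by
  simp only [stab, Prod.fst_add, Prod.snd_add, Pi.add_apply, Finset.sum_add_distrib]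
  abel

def posChar (κ : Key s k) : Unit ⊕ Fin k → Bits s :=
  Sum.elim (fun _ => κ.1) (fun j => κ.2 j)

def E : (Unit ⊕ Fin k) → Bits s → Bits r → Tables s k r
  | Sum.inl _, c, δ => (0, fun h => if h = c then δ else 0)
  | Sum.inr j, c, δ => (fun i u => if i = j ∧ u = c then δ else 0, 0)

lemma stab_E (κ : Key s k) (pos : Unit ⊕ Fin k) (c : Bits s) (δ : Bits r) :
    stab κ (E pos c δ) = if posChar κ pos = c then δ else 0 := by
  cases pos with
  | inl _ => simp [stab, E, posChar]; split_ifs <;> simp_all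
  | inr j =>
      simp only [stab, E, posChar, Sum.elim_inr, Pi.zero_apply, add_zero]
      rw [Finset.sum_eq_single j]
      · simp; split_ifs <;> simp_all
      · intro i _ hij; simp [hij]
      · simp

lemma exists_pos_ne {u v : Key s k} (h : u ≠ v) :
    ∃ pos, posChar u pos ≠ posChar v pos := by
  by_contra hc
  push_neg at hc
  apply h
  refine Prod.ext (hc (Sum.inl ())) (funext fun j => hc (Sum.inr j))

lemma stab_const (κ : Key s k) (a : Bits r) :
    stab κ ((0, fun _ => a) : Tables s k r) = a := by
  simp [stab]

lemma surj2 {u v : Key s k} (h : u ≠ v) (a b : Bits r) :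
    ∃ p : Tables s k r, stab u p = a ∧ stab v p = b := by
  obtain ⟨pos, hpos⟩ := exists_pos_ne h
  refine ⟨((0, fun _ => a) : Tables s k r) + E pos (posChar v pos) (b - a), ?_, ?_⟩ <;>
    rw [stab_add, stab_E, stab_const]
  · rw [if_neg hpos, add_zero]
  · rw [if_pos rfl]; abel

lemma surj3' {u v w : Key s k} (huv : u ≠ v) (pos : Unit ⊕ Fin k)
    (hu : posChar u pos ≠ posChar w pos) (hv : posChar v pos ≠ posChar w pos)
    (a b d : Bits r) :
    ∃ p : Tables s k r, stab u p = a ∧ stab v p = b ∧ stab w p = d := by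
  obtain ⟨p0, h1, h2⟩ := surj2 huv a b
  refine ⟨p0 + E pos (posChar w pos) (d - stab w p0), ?_, ?_, ?_⟩ <;>
    rw [stab_add, stab_E]
  · rw [if_neg hu, add_zero, h1]
  · rw [if_neg hv, add_zero, h2]
  · rw [if_pos rfl]; abel

lemma surj3 {x y z : Key s k} (hxy : x ≠ y) (hxz : x ≠ z) (hyz : y ≠ z)
    (a b d : Bits r) :
    ∃ p : Tables s k r, stab x p = a ∧ stab y p = b ∧ stab z p = d := by
  obtain ⟨pos, hp⟩ := exists_pos_ne hxy
  by_cases h1 : posChar z pos = posChar x pos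
  · -- y is unique at pos
    obtain ⟨p, pa, pd, pb⟩ :=
      surj3' (w := y) hxz pos (fun h => hp h) (fun h => hp (h1 ▸ h)) a d b
    exact ⟨p, pa, pb, pd⟩
  · by_cases h2 : posChar z pos = posChar y pos
    · -- x is unique at pos
      obtain ⟨p, pb, pd, pa⟩ :=
        surj3' (w := x) hyz pos (fun h => hp h.symm) (fun h => h1 (h2.symm ▸ h)) b d a
      exact ⟨p, pa, pb, pd⟩
    · -- z is unique at pos
      exact surj3' (w := z) hxy pos (fun h => h1 h.symm) (fun h => h2 h.symm) a b d

lemma fiber_card {V W : Type*} [Fintype V] [Fintype W]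
    [AddCommGroup V] [AddCommGroup W]
    (φ : V → W) (hadd : ∀ p q, φ (p + q) = φ p + φ q)
    (hsurj : ∀ w, ∃ v, φ v = w) (w : W) :
    (univ.filter fun v => φ v = w).card * Fintype.card W = Fintype.card V := by
  have hco : ∀ w₁ w₂ : W,
      (univ.filter fun v => φ v = w₁).card = (univ.filter fun v => φ v = w₂).card := by
    intro w₁ w₂
    obtain ⟨v₁, hv₁⟩ := hsurj w₁
    obtain ⟨v₂, hv₂⟩ := hsurj w₂
    have hd : φ (v₂ - v₁) = w₂ - w₁ := by
      have := hadd (v₂ - v₁) v₁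
      rw [sub_add_cancel, hv₁, hv₂] at this
      rw [eq_sub_iff_add_eq, ← this]
    refine Finset.card_bij (fun v _ => v + (v₂ - v₁)) ?_ ?_ ?_
    · intro v hv
      rw [Finset.mem_filter] at hv ⊢
      refine ⟨mem_univ _, ?_⟩
      rw [hadd, hv.2, hd]
      abel
    · intro a _ b _ h
      exact add_right_cancel h
    · intro v' hv'
      rw [Finset.mem_filter] at hv'
      refine ⟨v' - (v₂ - v₁), Finset.mem_filter.mpr ⟨mem_univ _, ?_⟩, sub_add_cancel _ _⟩
      have := hadd (v' - (v₂ - v₁)) (v₂ - v₁)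
      rw [sub_add_cancel, hv'.2, hd] at this
      have h3 := eq_sub_of_add_eq this.symm
      simpa using h3
  have hsum : Fintype.card V = ∑ w' : W, (univ.filter fun v => φ v = w').card := by
    rw [← card_univ]
    exact Finset.card_eq_sum_card_fiberwise (f := φ) (fun x _ => mem_univ _)
  rw [hsum, Finset.sum_congr rfl fun w' _ => hco w' w, Finset.sum_const, smul_eq_mul,
    card_univ, mul_comm]

lemma card_filter_prod {α β : Type*} [Fintype α] [Fintype β] (P : α × β → Prop) :
    (univ.filter P).card = ∑ a : α, (univ.filter fun b => P (a, b)).card := by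
  rw [Finset.card_eq_sum_card_fiberwise (f := Prod.fst) (t := univ) (fun x _ => mem_univ _)]
  refine Finset.sum_congr rfl fun a _ => ?_
  refine Finset.card_bij (fun p _ => p.2) ?_ ?_ ?_
  · intro p hp
    simp only [Finset.mem_filter, mem_univ, true_and] at hp ⊢
    have : p = (a, p.2) := by rw [← hp.2]
    rw [← this]; exact hp.1
  · intro p hp q hq h
    simp only [Finset.mem_filter, mem_univ, true_and] at hp hq
    exact Prod.ext (hp.2.trans hq.2.symm) h
  · intro b hb
    simp only [Finset.mem_filter, mem_univ, true_and] at hb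
    exact ⟨(a, b), Finset.mem_filter.mpr ⟨Finset.mem_filter.mpr ⟨mem_univ _, hb⟩, rfl⟩, rfl⟩

lemma count_key {Ω T V W : Type*} [Fintype Ω] [Fintype T] [Fintype V] [Fintype W]
    [AddCommGroup V] [AddCommGroup W]
    (e : Ω ≃ T × V) (P : Ω → Prop) (φ : T → V → W) (w : W)
    (hP : ∀ t v, P (e.symm (t, v)) ↔ φ t v = w)
    (hadd : ∀ t p q, φ t (p + q) = φ t p + φ t q)
    (hsurj : ∀ t w', ∃ v, φ t v = w') :
    (univ.filter P).card * Fintype.card W = Fintype.card Ω := by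
  have h1 : (univ.filter P).card = (univ.filter fun p : T × V => P (e.symm p)).card := by
    refine Finset.card_equiv e fun ω => ?_
    simp
  rw [h1, card_filter_prod, Finset.sum_mul]
  have h2 : ∀ t : T,
      (univ.filter fun v => P (e.symm (t, v))).card * Fintype.card W = Fintype.card V := by
    intro t
    have : (univ.filter fun v : V => P (e.symm (t, v)))
        = univ.filter fun v : V => φ t v = w := by
      apply Finset.filter_congr
      intro v _
      exact hP t v
    rw [this]
    exact fiber_card (φ t) (hadd t) (hsurj t) w
  rw [Finset.sum_congr rfl fun t _ => h2 t, Finset.sum_const, smul_eq_mul, card_univ,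
    Fintype.card_congr e, Fintype.card_prod]

end TwAux

namespace TwAux

variable {s k r : ℕ}

def twKey (t : Fin k → Bits s → Bits s) (κ : Key s k) : Key s k :=
  (κ.1 + ∑ i, t i (κ.2 i), κ.2)

lemma twKey_ne (t : Fin k → Bits s → Bits s) {u v : Key s k} (h : u ≠ v) :
    twKey t u ≠ twKey t v := by
  intro he
  apply h
  rw [twKey, twKey, Prod.mk.injEq] at he
  obtain ⟨h1, h2⟩ := he
  rw [h2] at h1
  exact Prod.ext (add_right_cancel h1) h2

def eqv : ((Fin k → Bits s → Bits s × Bits r) × (Bits s → Bits r)) ≃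
    ((Fin k → Bits s → Bits s) × Tables s k r) where
  toFun ω := (fun i u => (ω.1 i u).1, (fun i u => (ω.1 i u).2, ω.2))
  invFun p := (fun i u => (p.1 i u, p.2.1 i u), p.2.2)
  left_inv ω := rfl
  right_inv p := rfl

lemma tw_comp (t : Fin k → Bits s → Bits s) (v : Tables s k r) (κ : Key s k) :
    twistedTab (eqv.symm (t, v)) κ = stab (twKey t κ) v := by
  simp [twistedTab, eqv, stab, twKey, Prod.fst_sum, Prod.snd_sum]

lemma Pr_of_card {Ω : Type*} [Fintype Ω] (E : Ω → Prop) (m : ℕ)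
    (h : (univ.filter E).card * m = Fintype.card Ω) (h0 : Fintype.card Ω ≠ 0) :
    Pr E = 1 / (m : ℝ) := by
  have hm : m ≠ 0 := by rintro rfl; rw [mul_zero] at h; exact h0 h.symm
  have hN : (univ.filter E).card ≠ 0 := by
    intro h'; rw [h', zero_mul] at h; exact h0 h.symm
  have hNR : ((univ.filter E).card : ℝ) ≠ 0 := Nat.cast_ne_zero.mpr hN
  have hmR : (m : ℝ) ≠ 0 := Nat.cast_ne_zero.mpr hm
  rw [Pr, ← h]
  push_cast
  field_simp

end TwAux

/-- Twisted tabulation is 3-independent: picking all tables uniformly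
at random, every hash value `h(x)` is uniform in `[2^r]`, and for any three distinct
keys the joint distribution of their hash values factors, i.e. the three hash values
are mutually independent. -/
theorem twisted_tabulation_three_independent
    (s k r : ℕ) (hk : 1 ≤ k)
    (x y z : Bits s × (Fin k → Bits s)) (hxy : x ≠ y) (hxz : x ≠ z) (hyz : y ≠ z)
    (a b d : Bits r) :
    (∀ (w : Bits s × (Fin k → Bits s)) (v : Bits r),
        Pr (fun ω : (Fin k → Bits s → Bits s × Bits r) × (Bits s → Bits r) =>
          twistedTab ω w = v) = 1 / 2 ^ r) ∧
    Pr (fun ω : (Fin k → Bits s → Bits s × Bits r) × (Bits s → Bits r) =>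
        twistedTab ω x = a ∧ twistedTab ω y = b ∧ twistedTab ω z = d) =
      Pr (fun ω : (Fin k → Bits s → Bits s × Bits r) × (Bits s → Bits r) =>
          twistedTab ω x = a) *
        Pr (fun ω : (Fin k → Bits s → Bits s × Bits r) × (Bits s → Bits r) =>
          twistedTab ω y = b) *
        Pr (fun ω : (Fin k → Bits s → Bits s × Bits r) × (Bits s → Bits r) =>
          twistedTab ω z = d) := by
  have hcardr : Fintype.card (Bits r) = 2 ^ r := by simp
  have hsingle : ∀ (w : Bits s × (Fin k → Bits s)) (v : Bits r),
      Pr (fun ω : (Fin k → Bits s → Bits s × Bits r) × (Bits s → Bits r) =>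
        twistedTab ω w = v) = 1 / 2 ^ r := by
    intro w v
    have hc := TwAux.count_key TwAux.eqv
      (fun ω : (Fin k → Bits s → Bits s × Bits r) × (Bits s → Bits r) =>
        twistedTab ω w = v)
      (fun t p => TwAux.stab (TwAux.twKey t w) p) v
      (fun t p => by simp only [TwAux.tw_comp])
      (fun t p q => TwAux.stab_add _ _ _)
      (fun t w' => ⟨(0, fun _ => w'), TwAux.stab_const _ _⟩)
    rw [TwAux.Pr_of_card _ _ hc Fintype.card_ne_zero, hcardr]
    push_cast
    ring
  refine ⟨hsingle, ?_⟩
  have hc := TwAux.count_key TwAux.eqv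
    (fun ω : (Fin k → Bits s → Bits s × Bits r) × (Bits s → Bits r) =>
      twistedTab ω x = a ∧ twistedTab ω y = b ∧ twistedTab ω z = d)
    (fun t p => (TwAux.stab (TwAux.twKey t x) p, TwAux.stab (TwAux.twKey t y) p,
      TwAux.stab (TwAux.twKey t z) p)) (a, b, d)
    (fun t p => by simp [TwAux.tw_comp, Prod.ext_iff])
    (fun t p q => by simp [TwAux.stab_add, Prod.ext_iff])
    (fun t w' => by
      obtain ⟨p, h1, h2, h3⟩ := TwAux.surj3 (TwAux.twKey_ne t hxy) (TwAux.twKey_ne t hxz)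
        (TwAux.twKey_ne t hyz) w'.1 w'.2.1 w'.2.2
      exact ⟨p, by simp [h1, h2, h3]⟩)
  rw [hsingle x a, hsingle y b, hsingle z d,
    TwAux.Pr_of_card _ _ hc Fintype.card_ne_zero]
  have hcard3 : Fintype.card (Bits r × Bits r × Bits r) = 2 ^ r * (2 ^ r * 2 ^ r) := by
    simp [Fintype.card_prod, hcardr]
  rw [hcard3]
  push_cast
  field_simp
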